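/- For every $r, m \in \mathbb{N}$ there is a constant $C = C(r,m)$ such that every $r$-uniform hypergraph $G$ has a vertex set $Y$ with $|Y| \le C$ satisfying: for every $X \subseteq Y$ such that the hypergraph $G_Y(X)$ is nonempty, if $d$ is the maximum size of an edge of $G_Y(X)$, then the sub-hypergraph $G_Y^{(d)}(X)$ of edges of $G_Y(X)$ of size exactly $d$ contains a matching of size at least $m$. Moreover, if $Y \ne \emptyset$, then every edge of $G$ intersects $Y$. -/

import Mathlib

open Finset
open scoped Classical

namespace Stmt11Aux

/-! ### Part A: lexicographic descent with growing bounds -/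

/-- Strict lexicographic order on the first `r` coordinates (coordinate 0 has priority). -/
def LexLt (r : ℕ) (w v : ℕ → ℕ) : Prop :=
  ∃ i, i < r ∧ (∀ j, j < i → w j = v j) ∧ w i < v i

lemma LexLt.tail {r : ℕ} {w v : ℕ → ℕ} (h : LexLt (r + 1) w v) (h0 : ¬ w 0 < v 0) :
    w 0 = v 0 ∧ LexLt r (fun i => w (i + 1)) (fun i => v (i + 1)) := by
  obtain ⟨i, hi, heq, hlt⟩ := h
  cases i with
  | zero => exact absurd hlt h0
  | succ i' =>
    refine ⟨heq 0 (Nat.succ_pos _), ⟨i', by omega, fun j hj => heq (j+1) (by omega), hlt⟩⟩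

private def HB (Fr : ℕ → ℕ) : ℕ → ℕ → ℕ
  | 0, t => Fr t
  | (c+1), t => Fr t + 1 + HB Fr c (t + Fr t + 1)

private lemma HB_mono_t (Fr : ℕ → ℕ) (hFr : Monotone Fr) (c : ℕ) {t t' : ℕ} (htt : t ≤ t') :
    HB Fr c t ≤ HB Fr c t' := by
  induction c generalizing t t' with
  | zero => exact hFr htt
  | succ c ih =>
    simp only [HB]
    have h0 : Fr t ≤ Fr t' := hFr htt
    have h1 : t + Fr t + 1 ≤ t' + Fr t' + 1 := by omega
    have h2 := ih h1
    omega

private lemma le_HB (Fr : ℕ → ℕ) (c t : ℕ) : Fr t ≤ HB Fr c t := by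
  cases c with
  | zero => simp [HB]
  | succ c => simp only [HB]; omega

private lemma HB_le_succ (Fr : ℕ → ℕ) (c t : ℕ) : HB Fr c t ≤ HB Fr (c+1) t := by
  induction c generalizing t with
  | zero =>
    simp only [HB]
    omega
  | succ c ih =>
    simp only [HB]
    have := ih (t + Fr t + 1)
    simp only [HB] at this
    omega

private lemma HB_mono_c (Fr : ℕ → ℕ) (t : ℕ) {c c' : ℕ} (hcc : c ≤ c') :
    HB Fr c t ≤ HB Fr c' t :=
  monotone_nat_of_le_succ (fun c => HB_le_succ Fr c t) hcc

/-- Core inductive bound. -/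
private lemma HB_main (g : ℕ → ℕ) (r : ℕ) (Fr : ℕ → ℕ) (hFr : Monotone Fr)
    (hF : ∀ t₀ : ℕ, ∀ v : ℕ → ℕ → ℕ, ∀ n : ℕ,
      (∀ s, s < n → LexLt r (v (s + 1)) (v s)) →
      (∀ s, s ≤ n → ∀ i, i < r → v s i ≤ g (t₀ + s)) → n ≤ Fr t₀) :
    ∀ c t₀ : ℕ, ∀ v : ℕ → ℕ → ℕ, ∀ n : ℕ,
      (∀ s, s < n → LexLt (r + 1) (v (s + 1)) (v s)) →
      (∀ s, s ≤ n → ∀ i, i < r + 1 → v s i ≤ g (t₀ + s)) →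
      v 0 0 ≤ c → n ≤ HB Fr c t₀ := by
  intro c
  induction c with
  | zero =>
    intro t₀ v n hsteps hbd h0
    have hzero : ∀ s, s ≤ n → v s 0 = 0 := by
      intro s hsn
      induction s with
      | zero => omega
      | succ s ihs =>
        have hs' : s < n := by omega
        have hz : v s 0 = 0 := ihs (by omega)
        obtain ⟨i, hi, heq, hlt⟩ := hsteps s hs'
        cases i with
        | zero => omega
        | succ i' => rw [heq 0 (Nat.succ_pos _)]; exact hz
    have hnodrop : ∀ s, s < n → ¬ v (s + 1) 0 < v s 0 := by
      intro s hs
      have h1 := hzero s (by omega)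
      have h2 := hzero (s+1) (by omega)
      omega
    have : n ≤ Fr t₀ := by
      apply hF t₀ (fun s i => v s (i + 1)) n
      · intro s hs
        exact ((hsteps s hs).tail (hnodrop s hs)).2
      · intro s hs i hi
        exact hbd s hs (i+1) (by omega)
    simpa [HB] using this
  | succ c ih =>
    intro t₀ v n hsteps hbd h0
    simp only [HB]
    by_cases hex : ∃ s, s < n ∧ v (s + 1) 0 < v s 0
    · have hj := Nat.find_spec hex
      set j := Nat.find hex with hjdef
      obtain ⟨hjn, hjd⟩ := hj
      have hjmin : ∀ s, s < j → ¬ (s < n ∧ v (s + 1) 0 < v s 0) := fun s hs => Nat.find_min hex hs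
      have hconst : ∀ s, s ≤ j → v s 0 = v 0 0 := by
        intro s hsj
        induction s with
        | zero => rfl
        | succ s ihs =>
          have hsf : s < j := by omega
          have hsn : s < n := by omega
          have hnd : ¬ v (s + 1) 0 < v s 0 := fun hd => (hjmin s hsf) ⟨hsn, hd⟩
          obtain ⟨heq, -⟩ := (hsteps s hsn).tail hnd
          rw [heq, ihs (by omega)]
      have hpre : j ≤ Fr t₀ := by
        apply hF t₀ (fun s i => v s (i + 1)) j
        · intro s hs
          have hsn : s < n := by omega
          have hnd : ¬ v (s + 1) 0 < v s 0 := fun hd => (hjmin s hs) ⟨hsn, hd⟩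
          exact ((hsteps s hsn).tail hnd).2
        · intro s hs i hi
          exact hbd s (by omega) (i+1) (by omega)
      have htail : n - (j+1) ≤ HB Fr c (t₀ + j + 1) := by
        apply ih (t₀ + j + 1) (fun s => v (j + 1 + s)) (n - (j+1))
        · intro s hs
          have hstep := hsteps (j + 1 + s) (by omega)
          convert hstep using 2
          omega
        · intro s hs i hi
          have := hbd (j + 1 + s) (by omega) i hi
          convert this using 2
          omega
        · show v (j + 1 + 0) 0 ≤ c
          have h1 : v (j+1) 0 < v j 0 := hjd
          have h2 : v j 0 = v 0 0 := hconst j le_rfl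
          simp only [Nat.add_zero]
          omega
      have hmono : HB Fr c (t₀ + j + 1) ≤ HB Fr c (t₀ + Fr t₀ + 1) :=
        HB_mono_t Fr hFr c (by omega)
      omega
    · push_neg at hex
      have : n ≤ Fr t₀ := by
        apply hF t₀ (fun s i => v s (i + 1)) n
        · intro s hs
          exact ((hsteps s hs).tail (by exact fun hd => absurd hd (not_lt.mpr (hex s hs)))).2
        · intro s hs i hi
          exact hbd s hs (i+1) (by omega)
      omega

theorem descent_aux (g : ℕ → ℕ) (hg : Monotone g) :
    ∀ r : ℕ, ∃ F : ℕ → ℕ, Monotone F ∧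
      ∀ t₀ : ℕ, ∀ v : ℕ → ℕ → ℕ, ∀ n : ℕ,
        (∀ s, s < n → LexLt r (v (s + 1)) (v s)) →
        (∀ s, s ≤ n → ∀ i, i < r → v s i ≤ g (t₀ + s)) → n ≤ F t₀ := by
  intro r
  induction r with
  | zero =>
    refine ⟨fun _ => 0, monotone_const, fun t₀ v n hsteps _ => ?_⟩
    by_contra hn
    obtain ⟨i, hi, -, -⟩ := hsteps 0 (by omega)
    omega
  | succ r ih =>
    obtain ⟨Fr, hFr, hF⟩ := ih
    refine ⟨fun t => HB Fr (g t) t, ?_, ?_⟩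
    · intro t t' htt
      calc HB Fr (g t) t ≤ HB Fr (g t) t' := HB_mono_t Fr hFr _ htt
        _ ≤ HB Fr (g t') t' := HB_mono_c Fr t' (hg htt)
    · intro t₀ v n hsteps hbd
      exact HB_main g r Fr hFr hF (g t₀) t₀ v n hsteps hbd
        (by simpa using hbd 0 (by omega) 0 (by omega))

/-! ### Part B: traces and minimal traces -/

variable {V : Type} [DecidableEq V]

/-- `A` is a trace of the hypergraph `E` on `Y`. -/
def IsTrace (E : Set (Finset V)) (Y A : Finset V) : Prop :=
  ∃ e ∈ E, e ∩ Y = A ∧ ¬ e ⊆ Y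

/-- `A` is a minimal trace. -/
def IsMinTrace (E : Set (Finset V)) (Y A : Finset V) : Prop :=
  IsTrace E Y A ∧ ∀ B, IsTrace E Y B → ¬ B ⊂ A

/-- The link of a trace `A`: residues of edges whose trace is exactly `A`. -/
def lk (E : Set (Finset V)) (Y A : Finset V) : Set (Finset V) :=
  {f | ∃ e ∈ E, e ∩ Y = A ∧ ¬ e ⊆ Y ∧ f = e \ A}

/-- `A` has `m` pairwise disjoint link elements. -/
def Rich (E : Set (Finset V)) (m : ℕ) (Y A : Finset V) : Prop :=
  ∃ M : Finset (Finset V), M.card = m ∧ (∀ f ∈ M, f ∈ lk E Y A) ∧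
    (∀ a ∈ M, ∀ b ∈ M, a ≠ b → Disjoint a b)

def Bad (E : Set (Finset V)) (m : ℕ) (Y : Finset V) : Prop :=
  ∃ A, IsMinTrace E Y A ∧ ¬ Rich E m Y A

lemma IsTrace.subset {E : Set (Finset V)} {Y A : Finset V} (h : IsTrace E Y A) : A ⊆ Y := by
  obtain ⟨e, -, he, -⟩ := h
  rw [← he]; exact inter_subset_right

lemma lk_nonempty_mem {E : Set (Finset V)} {Y A f : Finset V} (hf : f ∈ lk E Y A) :
    f.Nonempty := by
  obtain ⟨e, -, he, hns, rfl⟩ := hf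
  rw [sdiff_nonempty]
  intro hsub
  exact hns (hsub.trans (he ▸ inter_subset_right))

lemma IsTrace.card_lt {E : Set (Finset V)} {r : ℕ} (hE : ∀ e ∈ E, e.card = r)
    {Y A : Finset V} (h : IsTrace E Y A) : A.card < r := by
  obtain ⟨e, heE, he, hns⟩ := h
  have hsub : A ⊆ e := by rw [← he]; exact inter_subset_left
  have hne : A ≠ e := by
    rintro rfl
    exact hns (inter_eq_left.mp he)
  have := Finset.card_lt_card (ssubset_of_subset_of_ne hsub hne)
  have hr := hE e heE
  omega

lemma IsTrace.exists_minTrace {E : Set (Finset V)} {Y B : Finset V} (h : IsTrace E Y B) :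
    ∃ A, A ⊆ B ∧ IsMinTrace E Y A := by
  have main : ∀ n : ℕ, ∀ B : Finset V, B.card ≤ n → IsTrace E Y B →
      ∃ A, A ⊆ B ∧ IsMinTrace E Y A := by
    intro n
    induction n with
    | zero =>
      intro B hB hTr
      refine ⟨B, Subset.rfl, hTr, fun C _ hC => ?_⟩
      have : B = ∅ := card_eq_zero.mp (by omega)
      subst this
      exact not_ssubset_empty _ hC
    | succ n ih =>
      intro B hB hTr
      by_cases hmin : ∀ C, IsTrace E Y C → ¬ C ⊂ B
      · exact ⟨B, Subset.rfl, hTr, hmin⟩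
      · push_neg at hmin
        obtain ⟨C, hCt, hCB⟩ := hmin
        have : C.card < B.card := card_lt_card hCB
        obtain ⟨A, hAC, hAmin⟩ := ih C (by omega) hCt
        exact ⟨A, hAC.trans hCB.subset, hAmin⟩
  exact main B.card B le_rfl h

/-- Minimal traces that survive stay minimal. -/
lemma IsMinTrace.persist {E : Set (Finset V)} {Y Y' B : Finset V} (hYY : Y ⊆ Y')
    (h : IsMinTrace E Y B) (h' : IsTrace E Y' B) : IsMinTrace E Y' B := by
  refine ⟨h', fun C hC hCB => ?_⟩
  obtain ⟨e, heE, heC, hns⟩ := hC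
  have hns0 : ¬ e ⊆ Y := fun hs => hns (hs.trans hYY)
  have htr : IsTrace E Y (e ∩ Y) := ⟨e, heE, rfl, hns0⟩
  have hsub : e ∩ Y ⊆ C := by rw [← heC]; exact inter_subset_inter Subset.rfl hYY
  exact h.2 _ htr (lt_of_le_of_lt hsub hCB)

/-- A new minimal trace strictly contains a dying minimal trace. -/
lemma new_minTrace_dominated {E : Set (Finset V)} {Y Y' B' : Finset V} (hYY : Y ⊆ Y')
    (h' : IsMinTrace E Y' B') (hnew : ¬ IsMinTrace E Y B') :
    ∃ B₀, IsMinTrace E Y B₀ ∧ B₀ ⊂ B' ∧ ¬ IsTrace E Y' B₀ := by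
  have htr0 := h'.1
  obtain ⟨⟨e, heE, heB, hns⟩, hmin'⟩ := h'
  have hnsY : ¬ e ⊆ Y := fun hs => hns (hs.trans hYY)
  have htr : IsTrace E Y (e ∩ Y) := ⟨e, heE, rfl, hnsY⟩
  obtain ⟨B₀, hB₀sub, hB₀min⟩ := htr.exists_minTrace
  have hB₀B' : B₀ ⊆ B' := hB₀sub.trans (by rw [← heB]; exact inter_subset_inter Subset.rfl hYY)
  by_cases hT : IsTrace E Y' B₀
  · exfalso
    rcases eq_or_ne B₀ B' with rfl | hne
    · exact hnew hB₀min
    · exact hmin' B₀ hT (ssubset_of_subset_of_ne hB₀B' hne)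
  · have hne : B₀ ≠ B' := by
      rintro rfl
      exact hT htr0
    exact ⟨B₀, hB₀min, ssubset_of_subset_of_ne hB₀B' hne, hT⟩

/-- Covering the link of a minimal trace kills it. -/
lemma minTrace_killed {E : Set (Finset V)} {Y A W : Finset V}
    (hA : IsMinTrace E Y A) (hcov : ∀ f ∈ lk E Y A, (f ∩ W).Nonempty) :
    ¬ IsTrace E (Y ∪ W) A := by
  rintro ⟨e, heE, heA, hns⟩
  have hnsY : ¬ e ⊆ Y := fun hs => hns (hs.trans subset_union_left)
  have hsub : e ∩ Y ⊆ A := by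
    rw [← heA]; exact inter_subset_inter Subset.rfl subset_union_left
  have heq : e ∩ Y = A := by
    by_contra hne
    exact hA.2 _ ⟨e, heE, rfl, hnsY⟩ (ssubset_of_subset_of_ne hsub hne)
  have hf : e \ A ∈ lk E Y A := ⟨e, heE, heq, hnsY, rfl⟩
  obtain ⟨v, hv⟩ := hcov _ hf
  simp only [mem_inter, mem_sdiff] at hv
  have : v ∈ e ∩ (Y ∪ W) := by
    simp only [mem_inter, mem_union]
    exact ⟨hv.1.1, Or.inr hv.2⟩
  rw [heA] at this
  exact hv.1.2 this

/-- A poor minimal trace has a small cover of its link. -/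
lemma exists_cover {E : Set (Finset V)} {r m : ℕ} (hE : ∀ e ∈ E, e.card = r)
    {Y A : Finset V} (_hA : IsMinTrace E Y A) (hpoor : ¬ Rich E m Y A) :
    ∃ W : Finset V, W.card ≤ r * m ∧ ∀ f ∈ lk E Y A, (f ∩ W).Nonempty := by
  have hm : m ≠ 0 := by
    rintro rfl
    exact hpoor ⟨(∅ : Finset (Finset V)), by simp⟩
  set P := fun k => ∃ M : Finset (Finset V), (∀ f ∈ M, f ∈ lk E Y A) ∧
      (∀ a ∈ M, ∀ b ∈ M, a ≠ b → Disjoint a b) ∧ M.card = k with hPdef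
  have hlt : ∀ k, P k → k < m := by
    rintro k ⟨M, h1, h2, h3⟩
    by_contra hge
    push_neg at hge
    obtain ⟨M', hM'M, hM'card⟩ := Finset.exists_subset_card_eq (h3 ▸ hge)
    exact hpoor ⟨M', hM'card, fun f hf => h1 f (hM'M hf),
      fun a ha b hb => h2 a (hM'M ha) b (hM'M hb)⟩
  have h0 : P 0 := ⟨(∅ : Finset (Finset V)), by simp⟩
  set kmax := Nat.findGreatest P (m - 1) with hkdef
  have hspec : P kmax := Nat.findGreatest_spec (Nat.zero_le (m-1)) h0
  obtain ⟨M₀, hM₀l, hM₀d, hM₀card⟩ := hspec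
  refine ⟨M₀.biUnion id, ?_, ?_⟩
  · calc (M₀.biUnion id).card ≤ ∑ f ∈ M₀, f.card := Finset.card_biUnion_le
      _ ≤ ∑ _f ∈ M₀, r := by
          apply Finset.sum_le_sum
          intro f hf
          obtain ⟨e, heE, -, -, rfl⟩ := hM₀l f hf
          have := hE e heE
          have hle := Finset.card_le_card (sdiff_subset (s := e) (t := A))
          omega
      _ = kmax * r := by rw [Finset.sum_const, smul_eq_mul, hM₀card]
      _ ≤ r * m := by
          have h1 : kmax ≤ m - 1 := Nat.findGreatest_le (m - 1)
          have h2 : kmax * r ≤ (m-1) * r := Nat.mul_le_mul_right r h1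
          nlinarith [Nat.sub_le m 1]
  · intro f hf
    by_contra hemp
    rw [not_nonempty_iff_eq_empty] at hemp
    have hdisj : ∀ g ∈ M₀, Disjoint f g := by
      intro g hg
      rw [Finset.disjoint_left]
      intro a haf hag
      have : a ∈ f ∩ M₀.biUnion id := by
        simp only [mem_inter, Finset.mem_biUnion, id]
        exact ⟨haf, g, hg, hag⟩
      rw [hemp] at this
      exact absurd this (notMem_empty a)
    have hfM : f ∉ M₀ := by
      intro hfM
      obtain ⟨a, ha⟩ := lk_nonempty_mem hf
      have : a ∈ f ∩ M₀.biUnion id := by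
        simp only [mem_inter, Finset.mem_biUnion, id]
        exact ⟨ha, f, hfM, ha⟩
      rw [hemp] at this
      exact absurd this (notMem_empty a)
    have hP1 : P (kmax + 1) := by
      refine ⟨insert f M₀, ?_, ?_, ?_⟩
      · intro g hg
        rcases Finset.mem_insert.mp hg with rfl | hg
        · exact hf
        · exact hM₀l g hg
      · intro a ha b hb hab
        rcases Finset.mem_insert.mp ha with rfl | ha'
        · rcases Finset.mem_insert.mp hb with rfl | hb'
          · exact absurd rfl hab
          · exact hdisj b hb'
        · rcases Finset.mem_insert.mp hb with rfl | hb'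
          · exact (hdisj a ha').symm
          · exact hM₀d a ha' b hb' hab
      · rw [Finset.card_insert_of_notMem hfM, hM₀card]
    have hles : kmax + 1 ≤ m - 1 := by
      have := hlt _ hP1
      omega
    exact Nat.findGreatest_is_greatest (by omega) hles hP1

/-! ### Part C: the measure and its lexicographic decrease -/

/-- Number of minimal traces of size `j`. -/
noncomputable def mu (E : Set (Finset V)) (Y : Finset V) : ℕ → ℕ := fun j =>
  (Y.powerset.filter (fun A => IsMinTrace E Y A ∧ A.card = j)).card

lemma mu_le (E : Set (Finset V)) (Y : Finset V) (j : ℕ) : mu E Y j ≤ 2 ^ Y.card := by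
  calc mu E Y j ≤ Y.powerset.card := Finset.card_filter_le _ _
    _ = 2 ^ Y.card := Finset.card_powerset Y

lemma mu_lexLt {E : Set (Finset V)} {r : ℕ} (hE : ∀ e ∈ E, e.card = r)
    {Y A W : Finset V} (hA : IsMinTrace E Y A)
    (hcov : ∀ f ∈ lk E Y A, (f ∩ W).Nonempty) :
    LexLt r (mu E (Y ∪ W)) (mu E Y) := by
  set Y' := Y ∪ W with hY'
  have hYY : Y ⊆ Y' := subset_union_left
  set R := Y.powerset.filter (fun B => IsMinTrace E Y B ∧ ¬ IsTrace E Y' B) with hR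
  have hAR : A ∈ R := by
    rw [hR, mem_filter, mem_powerset]
    exact ⟨hA.1.subset, hA, minTrace_killed hA hcov⟩
  obtain ⟨B₁, hB₁R, hB₁min⟩ := R.exists_min_image card ⟨A, hAR⟩
  rw [hR, mem_filter, mem_powerset] at hB₁R
  obtain ⟨hB₁Y, hB₁MT, hB₁dead⟩ := hB₁R
  set b := B₁.card with hb
  have hRmem : ∀ B, IsMinTrace E Y B → ¬ IsTrace E Y' B → b ≤ B.card := by
    intro B h1 h2
    apply hB₁min
    rw [hR, mem_filter, mem_powerset]
    exact ⟨h1.1.subset, h1, h2⟩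
  have hback : ∀ B, IsMinTrace E Y' B → B.card ≤ b → IsMinTrace E Y B := by
    intro B hB hcard
    by_contra hnot
    obtain ⟨B₀, hB₀MT, hB₀ss, hB₀dead⟩ := new_minTrace_dominated hYY hB hnot
    have h1 := hRmem B₀ hB₀MT hB₀dead
    have h2 := Finset.card_lt_card hB₀ss
    omega
  have hforw : ∀ B, IsMinTrace E Y B → B.card < b → IsMinTrace E Y' B := by
    intro B hB hcard
    by_cases hT : IsTrace E Y' B
    · exact hB.persist hYY hT
    · have := hRmem B hB hT
      omega
  refine ⟨b, hB₁MT.1.card_lt hE, ?_, ?_⟩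
  · intro j hj
    show mu E Y' j = mu E Y j
    unfold mu
    congr 1
    apply Finset.ext
    intro B
    simp only [mem_filter, mem_powerset]
    constructor
    · rintro ⟨hsub, hMT, hcard⟩
      have hMTY : IsMinTrace E Y B := hback B hMT (by omega)
      exact ⟨hMTY.1.subset, hMTY, hcard⟩
    · rintro ⟨hsub, hMT, hcard⟩
      exact ⟨hsub.trans hYY, hforw B hMT (by omega), hcard⟩
  · show mu E Y' b < mu E Y b
    unfold mu
    apply Finset.card_lt_card
    constructor
    · intro B hB
      rw [mem_filter, mem_powerset] at hB ⊢
      obtain ⟨hsub, hMT, hcard⟩ := hB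
      have hMTY : IsMinTrace E Y B := hback B hMT (by omega)
      exact ⟨hMTY.1.subset, hMTY, hcard⟩
    · intro hsup
      have hB₁mem : B₁ ∈ Y.powerset.filter (fun A => IsMinTrace E Y A ∧ A.card = b) := by
        rw [mem_filter, mem_powerset]
        exact ⟨hB₁Y, hB₁MT, rfl⟩
      have := hsup hB₁mem
      rw [mem_filter] at this
      exact hB₁dead this.2.1.1

/-! ### Part D: the loop -/

/-- Bundled step for a bad `Y`. -/
lemma bad_step {E : Set (Finset V)} {r m : ℕ} (hE : ∀ e ∈ E, e.card = r)
    {Y : Finset V} (hbad : Bad E m Y) :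
    ∃ W : Finset V, W.card ≤ r * m ∧ LexLt r (mu E (Y ∪ W)) (mu E Y) ∧
      (Y = ∅ → ∀ e ∈ E, (e ∩ (Y ∪ W)).Nonempty) := by
  obtain ⟨A, hA, hpoor⟩ := hbad
  obtain ⟨W, hWcard, hWcov⟩ := exists_cover hE hA hpoor
  refine ⟨W, hWcard, mu_lexLt hE hA hWcov, ?_⟩
  rintro rfl e heE
  have hA0 : A = ∅ := subset_empty.mp hA.1.subset
  subst hA0
  obtain ⟨e₀, he₀E, -, hns₀⟩ := hA.1
  have he₀ : e₀ ≠ ∅ := fun h => hns₀ (by simp [h])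
  have hr : 1 ≤ r := by
    have h1 := hE e₀ he₀E
    have h2 := Finset.card_pos.mpr (nonempty_iff_ne_empty.mpr he₀)
    omega
  have heNe : ¬ e ⊆ (∅ : Finset V) := by
    rw [subset_empty]
    intro h
    have := hE e heE
    rw [h] at this
    simp at this
    omega
  have hf : e ∈ lk E ∅ ∅ := ⟨e, heE, by simp, heNe, by simp⟩
  have := hWcov e hf
  simpa using this

noncomputable def stepY (E : Set (Finset V)) (r m : ℕ) (hE : ∀ e ∈ E, e.card = r)
    (Y : Finset V) : Finset V :=
  if h : Bad E m Y then Y ∪ (bad_step hE h).choose else Y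

noncomputable def Yseq (E : Set (Finset V)) (r m : ℕ) (hE : ∀ e ∈ E, e.card = r) :
    ℕ → Finset V
  | 0 => ∅
  | (k+1) => stepY E r m hE (Yseq E r m hE k)

lemma Yseq_card {E : Set (Finset V)} {r m : ℕ} (hE : ∀ e ∈ E, e.card = r) (k : ℕ) :
    (Yseq E r m hE k).card ≤ r * m * k := by
  induction k with
  | zero => simp [Yseq]
  | succ k ih =>
    show (stepY E r m hE (Yseq E r m hE k)).card ≤ r * m * (k+1)
    unfold stepY
    split
    · rename_i h
      calc (Yseq E r m hE k ∪ (bad_step hE h).choose).card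
          ≤ (Yseq E r m hE k).card + ((bad_step hE h).choose).card := card_union_le _ _
        _ ≤ r * m * k + r * m := by
            have := (bad_step hE h).choose_spec.1
            omega
        _ = r * m * (k+1) := by ring
    · calc (Yseq E r m hE k).card ≤ r * m * k := ih
        _ ≤ r * m * (k+1) := by nlinarith

lemma Yseq_meets {E : Set (Finset V)} {r m : ℕ} (hE : ∀ e ∈ E, e.card = r) (k : ℕ) :
    (Yseq E r m hE k) ≠ ∅ → ∀ e ∈ E, (e ∩ (Yseq E r m hE k)).Nonempty := by
  induction k with
  | zero => intro h; exact absurd rfl h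
  | succ k ih =>
    intro hne e heE
    by_cases h : Bad E m (Yseq E r m hE k)
    · have heq : Yseq E r m hE (k+1) = Yseq E r m hE k ∪ (bad_step hE h).choose := by
        show stepY E r m hE (Yseq E r m hE k) = _
        unfold stepY
        rw [dif_pos h]
      rw [heq]
      by_cases hYk : Yseq E r m hE k = ∅
      · exact (bad_step hE h).choose_spec.2.2 hYk e heE
      · obtain ⟨a, ha⟩ := ih hYk e heE
        rw [mem_inter] at ha
        exact ⟨a, mem_inter.mpr ⟨ha.1, mem_union_left _ ha.2⟩⟩
    · have heq : Yseq E r m hE (k+1) = Yseq E r m hE k := by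
        show stepY E r m hE (Yseq E r m hE k) = _
        unfold stepY
        rw [dif_neg h]
      rw [heq] at hne ⊢
      exact ih hne e heE

/-- The loop stabilizes within a number of steps depending only on `r`, `m`. -/
lemma exists_stable (r m : ℕ) :
    ∃ N : ℕ, ∀ (V : Type) [DecidableEq V] (E : Set (Finset V))
      (hE : ∀ e ∈ E, e.card = r), ∃ k ≤ N, ¬ Bad E m (Yseq E r m hE k) := by
  have hg : Monotone (fun s : ℕ => 2 ^ (r * m * s)) := by
    intro a b hab
    exact Nat.pow_le_pow_right (by norm_num) (Nat.mul_le_mul_left _ hab)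
  obtain ⟨F, -, hF⟩ := descent_aux (fun s : ℕ => 2 ^ (r * m * s)) hg r
  refine ⟨F 0, ?_⟩
  intro V _ E hE
  by_contra hcon
  push_neg at hcon
  have hbad : ∀ k, k ≤ F 0 → Bad E m (Yseq E r m hE k) := hcon
  have hstep : ∀ s, s < F 0 + 1 →
      LexLt r (mu E (Yseq E r m hE (s+1))) (mu E (Yseq E r m hE s)) := by
    intro s hs
    have h := hbad s (by omega)
    have : Yseq E r m hE (s+1) = Yseq E r m hE s ∪ (bad_step hE h).choose := by
      show stepY E r m hE (Yseq E r m hE s) = _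
      unfold stepY
      rw [dif_pos h]
    rw [this]
    exact (bad_step hE h).choose_spec.2.1
  have hbd : ∀ s, s ≤ F 0 + 1 → ∀ i, i < r →
      mu E (Yseq E r m hE s) i ≤ (fun s : ℕ => 2 ^ (r * m * s)) (0 + s) := by
    intro s hs i hi
    calc mu E (Yseq E r m hE s) i ≤ 2 ^ (Yseq E r m hE s).card := mu_le E _ i
      _ ≤ 2 ^ (r * m * s) := Nat.pow_le_pow_right (by norm_num) (Yseq_card hE s)
      _ = (fun s : ℕ => 2 ^ (r * m * s)) (0 + s) := by simp
  have := hF 0 (fun s => mu E (Yseq E r m hE s)) (F 0 + 1) hstep hbd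
  omega

/-! ### Part E: final verification -/

lemma disjoint_sdiff_iff {e Y X : Finset V} :
    Disjoint e (Y \ X) ↔ e ∩ Y ⊆ X := by
  rw [Finset.disjoint_left]
  constructor
  · intro h a ha
    rw [mem_inter] at ha
    by_contra hax
    exact h ha.1 (mem_sdiff.mpr ⟨ha.2, hax⟩)
  · intro h a hae haYX
    rw [mem_sdiff] at haYX
    exact haYX.2 (h (mem_inter.mpr ⟨hae, haYX.1⟩))

lemma sdiff_eq_of_inter {e Y X : Finset V} (hXY : X ⊆ Y) (h : e ∩ Y ⊆ X) :
    e \ X = e \ (e ∩ Y) := by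
  have hEq : e ∩ X = e ∩ Y := by
    apply Finset.ext
    intro a
    simp only [mem_inter]
    exact ⟨fun ⟨h1, h2⟩ => ⟨h1, hXY h2⟩, fun ⟨h1, h2⟩ => ⟨h1, h (mem_inter.mpr ⟨h1, h2⟩)⟩⟩
  rw [← hEq, Finset.sdiff_inter_self_left]

lemma card_witness {E : Set (Finset V)} {r : ℕ} (hE : ∀ e ∈ E, e.card = r)
    {e Y X : Finset V} (heE : e ∈ E) (hXY : X ⊆ Y) (h : e ∩ Y ⊆ X) :
    (e \ X).card + (e ∩ Y).card = r := by
  rw [sdiff_eq_of_inter hXY h]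
  have h2 : e ∩ (e ∩ Y) = e ∩ Y := inter_eq_right.mpr inter_subset_left
  calc (e \ (e ∩ Y)).card + (e ∩ Y).card
      = (e \ (e ∩ Y)).card + (e ∩ (e ∩ Y)).card := by rw [h2]
    _ = e.card := Finset.card_sdiff_add_card_inter e (e ∩ Y)
    _ = r := hE e heE

end Stmt11Aux

theorem stmt_11 (r m : ℕ) :
    ∃ C : ℕ, ∀ (V : Type) [DecidableEq V] (E : Set (Finset V)),
      (∀ e ∈ E, e.card = r) →
      ∃ Y : Finset V, Y.card ≤ C ∧
        (∀ X ⊆ Y, ∀ d : ℕ,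
          (∃ w ∈ {w : Finset V | ∃ e ∈ E, Disjoint e (Y \ X) ∧ w = e \ X ∧ w ≠ ∅},
            w.card = d) →
          (∀ w ∈ {w : Finset V | ∃ e ∈ E, Disjoint e (Y \ X) ∧ w = e \ X ∧ w ≠ ∅},
            w.card ≤ d) →
          ∃ M : Finset (Finset V), m ≤ M.card ∧
            (∀ w ∈ M, (∃ e ∈ E, Disjoint e (Y \ X) ∧ w = e \ X ∧ w ≠ ∅) ∧ w.card = d) ∧
            (∀ a ∈ M, ∀ b ∈ M, a ≠ b → Disjoint a b)) ∧
        (Y ≠ ∅ → ∀ e ∈ E, (e ∩ Y).Nonempty) := by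
  classical
  obtain ⟨N, hN⟩ := Stmt11Aux.exists_stable r m
  refine ⟨r * m * N, ?_⟩
  intro V _ E hE
  obtain ⟨k, hkN, hgood⟩ := hN V E hE
  refine ⟨Stmt11Aux.Yseq E r m hE k, ?_, ?_, ?_⟩
  · calc (Stmt11Aux.Yseq E r m hE k).card ≤ r * m * k := Stmt11Aux.Yseq_card hE k
      _ ≤ r * m * N := Nat.mul_le_mul_left _ hkN
  · set Y := Stmt11Aux.Yseq E r m hE k with hYdef
    intro X hXY d hex hle
    obtain ⟨w₀, hw₀S, hw₀d⟩ := hex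
    simp only [Set.mem_setOf_eq] at hw₀S
    obtain ⟨e₀, he₀E, he₀dis, hw₀eq, hw₀ne⟩ := hw₀S
    have he₀sub : e₀ ∩ Y ⊆ X := Stmt11Aux.disjoint_sdiff_iff.mp he₀dis
    have he₀ns : ¬ e₀ ⊆ Y := by
      intro hsub
      apply hw₀ne
      rw [hw₀eq, Finset.sdiff_eq_empty_iff_subset]
      intro a ha
      exact he₀sub (mem_inter.mpr ⟨ha, hsub ha⟩)
    have hBtr : Stmt11Aux.IsTrace E Y (e₀ ∩ Y) := ⟨e₀, he₀E, rfl, he₀ns⟩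
    have hcard₀ : d + (e₀ ∩ Y).card = r := by
      have h1 := Stmt11Aux.card_witness hE he₀E hXY he₀sub
      rw [← hw₀eq] at h1
      omega
    -- e₀ ∩ Y is a minimal trace
    have hBmin : Stmt11Aux.IsMinTrace E Y (e₀ ∩ Y) := by
      obtain ⟨A₁, hA₁B, hA₁min⟩ := hBtr.exists_minTrace
      obtain ⟨e₁, he₁E, he₁A, he₁ns⟩ := hA₁min.1
      have hA₁X : A₁ ⊆ X := hA₁B.trans he₀sub
      have he₁sub : e₁ ∩ Y ⊆ X := by rw [he₁A]; exact hA₁X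
      have hw₁S : (e₁ \ X) ∈ {w : Finset V | ∃ e ∈ E,
          Disjoint e (Y \ X) ∧ w = e \ X ∧ w ≠ ∅} := by
        refine Set.mem_setOf_eq ▸ ⟨e₁, he₁E, Stmt11Aux.disjoint_sdiff_iff.mpr he₁sub, rfl, ?_⟩
        rw [Ne, Finset.sdiff_eq_empty_iff_subset]
        intro hsub
        exact he₁ns (hsub.trans hXY)
      have hle₁ : (e₁ \ X).card ≤ d := hle _ hw₁S
      have hcard₁ : (e₁ \ X).card + A₁.card = r := by
        have h2 := Stmt11Aux.card_witness hE he₁E hXY he₁sub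
        rwa [he₁A] at h2
      have hA₁cB : A₁.card ≤ (e₀ ∩ Y).card := Finset.card_le_card hA₁B
      have heq : A₁ = e₀ ∩ Y := Finset.eq_of_subset_of_card_le hA₁B (by omega)
      rwa [← heq]
    have hrich : Stmt11Aux.Rich E m Y (e₀ ∩ Y) := by
      by_contra hpoor
      exact hgood ⟨e₀ ∩ Y, hBmin, hpoor⟩
    obtain ⟨M, hMcard, hMlk, hMdisj⟩ := hrich
    refine ⟨M, le_of_eq hMcard.symm, ?_, hMdisj⟩
    intro w hw
    obtain ⟨e, heE, heB, hens, rfl⟩ := hMlk w hw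
    have hesub : e ∩ Y ⊆ X := by rw [heB]; exact he₀sub
    have hexX : e \ (e₀ ∩ Y) = e \ X := by
      rw [Stmt11Aux.sdiff_eq_of_inter hXY hesub, heB]
    have hwne : e \ (e₀ ∩ Y) ≠ ∅ :=
      Finset.nonempty_iff_ne_empty.mp (Stmt11Aux.lk_nonempty_mem ⟨e, heE, heB, hens, rfl⟩)
    constructor
    · exact ⟨e, heE, Stmt11Aux.disjoint_sdiff_iff.mpr hesub, hexX, hwne⟩
    · have h3 := Stmt11Aux.card_witness hE heE hXY hesub
      rw [heB] at h3
      rw [hexX]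
      omega
  · exact fun hne => Stmt11Aux.Yseq_meets hE k hne
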